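/- The quotient ring 𝒜 = E'(ℝ_-)/J, where E'(ℝ_-) is the convolution ring of distributions with compact support in (−∞,0] and J = {φ ∈ E'(ℝ_-) : sup(supp φ) < 0}, is an integral domain. -/
import Mathlib


/-- Let `E` be (a model of) the convolution ring `E'(ℝ₋)` of
distributions with compact support contained in `(−∞, 0]`: a commutative ring whose
product is convolution, with unit `δ₀`, together with `r : E → ℝ`, the supremum of the
support, satisfying `r ≤ 0`, `r(δ₀) = 0` and the Titchmarsh convolution theorem
`r(x * y) = r(x) + r(y)` for nonzero `x, y` (in particular `x * y ≠ 0`).  Let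
`J = {φ : r(φ) < 0}` be the ideal of elements with support supremum strictly negative.
Then the quotient ring `𝒜 = E/J` is an integral domain. -/
theorem quotient_is_domain
    (E : Type) [CommRing E] [Nontrivial E]
    (r : E → ℝ)
    (hr_nonpos : ∀ x : E, r x ≤ 0)
    (hr_one : r 1 = 0)
    (titchmarsh : ∀ x y : E, x ≠ 0 → y ≠ 0 → x * y ≠ 0 ∧ r (x * y) = r x + r y)
    (J : Ideal E)
    (hJ : ∀ x : E, x ∈ J ↔ (x = 0 ∨ r x < 0)) :
    IsDomain (E ⧸ J) := by
  have hprime : J.IsPrime := by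
    constructor
    · intro htop
      have h1 : (1 : E) ∈ J := htop ▸ Submodule.mem_top
      rcases (hJ 1).1 h1 with h | h
      · exact one_ne_zero h
      · rw [hr_one] at h; exact lt_irrefl 0 h
    · intro x y hxy
      by_contra hcon
      push_neg at hcon
      obtain ⟨hx, hy⟩ := hcon
      have hx0 : x ≠ 0 := fun h => hx ((hJ x).2 (Or.inl h))
      have hy0 : y ≠ 0 := fun h => hy ((hJ y).2 (Or.inl h))
      have hrx : r x = 0 := le_antisymm (hr_nonpos x)
        (not_lt.1 fun h => hx ((hJ x).2 (Or.inr h)))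
      have hry : r y = 0 := le_antisymm (hr_nonpos y)
        (not_lt.1 fun h => hy ((hJ y).2 (Or.inr h)))
      obtain ⟨hne, heq⟩ := titchmarsh x y hx0 hy0
      rcases (hJ (x * y)).1 hxy with h | h
      · exact hne h
      · rw [heq, hrx, hry] at h; simp at h
  exact Ideal.Quotient.isDomain_iff_prime J |>.2 hprime
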